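/- For a minimal generating set: if 𝒯'₀ is a minimal generating set for the E-closed set 𝒯₀, then every theory in 𝒯'₀ is isolated even within 𝒯₀: for each T ∈ 𝒯'₀ there is a sentence φ ∈ T with {T' ∈ 𝒯₀ : φ ∈ T'} = {T}. -/

import Mathlib

open FirstOrder

/-- The E-closure of a family of theories: the family itself together with all
maximal (complete) theories each of whose sentences belongs to infinitely many
members of the family (Proposition 2.2 of the paper). -/
def ClE {L : Language} (𝒯 : Set L.Theory) : Set L.Theory :=
  𝒯 ∪ {T | T.IsMaximal ∧ ∀ φ ∈ T, {T' ∈ 𝒯 | φ ∈ T'}.Infinite}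

namespace ClEAux
variable {L : Language}

theorem inf_mem_iff {T : L.Theory} (h : T.IsMaximal) {φ ψ : L.Sentence} :
    φ ⊓ ψ ∈ T ↔ φ ∈ T ∧ ψ ∈ T := by
  simp only [h.mem_iff_models, Language.Theory.models_sentence_iff, Language.Sentence.Realize,
    Language.Formula.realize_inf]
  exact ⟨fun hh => ⟨fun M => (hh M).1, fun M => (hh M).2⟩, fun ⟨h1, h2⟩ M => ⟨h1 M, h2 M⟩⟩

theorem not_not_mem {T : L.Theory} (h : T.IsSatisfiable) {φ : L.Sentence}
    (hφ : φ ∈ T) : φ.not ∉ T := by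
  intro hn
  obtain ⟨M⟩ := h
  have h1 : (M : Type _) ⊨ φ := M.is_model.realize_of_mem φ hφ
  have h2 : (M : Type _) ⊨ φ.not := M.is_model.realize_of_mem _ hn
  exact (Language.Sentence.realize_not _).1 h2 h1

theorem sep {T T' : L.Theory} (h : T.IsMaximal) (h' : T'.IsMaximal) (hne : T ≠ T') :
    ∃ ψ ∈ T, ψ ∉ T' := by
  by_contra hc
  push_neg at hc
  apply hne
  ext φ
  refine ⟨hc φ, fun hφ => ?_⟩
  rcases h.mem_or_not_mem φ with h1 | h1
  · exact h1
  · exact absurd (hc _ h1) (not_not_mem h'.1 hφ)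

theorem conj_lemma {T : L.Theory} (h : T.IsMaximal) (F : Set L.Theory) (hF : F.Finite)
    (hmem : ∀ T' ∈ F, T'.IsMaximal ∧ T' ≠ T) :
    ∃ χ ∈ T, ∀ T' ∈ F, χ ∉ T' := by
  revert hmem
  refine Set.Finite.induction_on (motive := fun F _ => (∀ T' ∈ F, T'.IsMaximal ∧ T' ≠ T) →
    ∃ χ ∈ T, ∀ T' ∈ F, χ ∉ T') F hF ?_ ?_
  · exact fun _ => ⟨⊤, h.mem_of_models (fun _ _ => by simp [Language.Sentence.Realize]), by simp⟩
  · intro T₁ F' _ _ ih hmem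
    obtain ⟨χ, hχT, hχ⟩ := ih (fun T' hT' => hmem T' (Set.mem_insert_of_mem _ hT'))
    obtain ⟨hT₁max, hT₁ne⟩ := hmem T₁ (Set.mem_insert _ _)
    obtain ⟨ψ, hψT, hψ⟩ := sep h hT₁max hT₁ne.symm
    refine ⟨χ ⊓ ψ, (inf_mem_iff h).2 ⟨hχT, hψT⟩, ?_⟩
    rintro T' (rfl | hT') hc
    · exact hψ ((inf_mem_iff hT₁max).1 hc).2
    · exact hχ T' hT' ((inf_mem_iff (hmem T' (Set.mem_insert_of_mem _ hT')).1).1 hc).1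

end ClEAux

/-- Theorem 3.2, (2) ⇒ (4): theories of a minimal generating set are isolated
even within the whole E-closed set. -/
theorem minimal_generating_isolated_in_closure {L : Language}
    (𝒯₀ 𝒯'₀ : Set L.Theory)
    (hcomp : ∀ T ∈ 𝒯₀, T.IsMaximal)
    (hclosed : ClE 𝒯₀ = 𝒯₀)
    (hsub : 𝒯'₀ ⊆ 𝒯₀)
    (hgen : ClE 𝒯'₀ = 𝒯₀)
    (hmin : ∀ S ⊂ 𝒯'₀, ClE S ≠ 𝒯₀) :
    ∀ T ∈ 𝒯'₀, ∃ φ ∈ T, {T' ∈ 𝒯₀ | φ ∈ T'} = {T} := by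
  intro T hT
  have hTmax : T.IsMaximal := hcomp T (hsub hT)
  set S : Set L.Theory := 𝒯'₀ \ {T} with hS
  have hSss : S ⊂ 𝒯'₀ := by
    constructor
    · exact Set.diff_subset
    · intro hc
      exact (hc hT).2 rfl
  have hClES : ClE S ⊆ 𝒯₀ := by
    rw [← hgen]
    rintro T' (hT' | ⟨hmax, hinf⟩)
    · exact Or.inl hT'.1
    · exact Or.inr ⟨hmax, fun φ hφ => (hinf φ hφ).mono (fun x hx => ⟨hx.1.1, hx.2⟩)⟩
  -- T itself is not in ClE S
  have hTnot : T ∉ ClE S := by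
    intro hc
    apply hmin S hSss
    apply Set.Subset.antisymm hClES
    rw [← hgen]
    rintro T' (hT' | ⟨hmax, hinf⟩)
    · by_cases hTe : T' = T
      · exact hTe ▸ hc
      · exact Or.inl ⟨hT', hTe⟩
    · refine Or.inr ⟨hmax, fun φ hφ => ?_⟩
      have := (hinf φ hφ).diff (Set.finite_singleton T)
      refine this.mono ?_
      rintro x ⟨⟨hx1, hx2⟩, hx3⟩
      exact ⟨⟨hx1, hx3⟩, hx2⟩
  -- extract a sentence with only finitely many S-theories containing it
  have hφ0 : ∃ φ₀ ∈ T, {T' ∈ S | φ₀ ∈ T'}.Finite := by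
    by_contra hc
    push_neg at hc
    exact hTnot (Or.inr ⟨hTmax, fun φ hφ => hc φ hφ⟩)
  obtain ⟨φ₀, hφ₀T, hφ₀fin⟩ := hφ0
  have hFmem : ∀ T' ∈ {T' ∈ S | φ₀ ∈ T'}, T'.IsMaximal ∧ T' ≠ T := by
    rintro T' ⟨⟨hT'1, hT'2⟩, _⟩
    exact ⟨hcomp T' (hsub hT'1), hT'2⟩
  obtain ⟨χ, hχT, hχ⟩ := ClEAux.conj_lemma hTmax _ hφ₀fin hFmem
  refine ⟨φ₀ ⊓ χ, (ClEAux.inf_mem_iff hTmax).2 ⟨hφ₀T, hχT⟩, ?_⟩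
  -- only T among 𝒯'₀ contains φ₀ ⊓ χ
  have hkey : {T' ∈ 𝒯'₀ | φ₀ ⊓ χ ∈ T'} ⊆ {T} := by
    rintro T' ⟨hT'1, hT'2⟩
    by_contra hne
    have hT'max := hcomp T' (hsub hT'1)
    have h1 := (ClEAux.inf_mem_iff hT'max).1 hT'2
    exact hχ T' ⟨⟨hT'1, hne⟩, h1.1⟩ h1.2
  apply Set.Subset.antisymm
  · rintro T'' ⟨hT''1, hT''2⟩
    rw [← hgen] at hT''1
    rcases hT''1 with hT'' | ⟨_, hinf⟩
    · exact hkey ⟨hT'', hT''2⟩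
    · exact absurd ((Set.finite_singleton T).subset hkey) (hinf _ hT''2)
  · rintro x rfl
    exact ⟨hsub hT, (ClEAux.inf_mem_iff hTmax).2 ⟨hφ₀T, hχT⟩⟩
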